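/- Let u be a Lyndon word with a decomposition u = vw where v is a Lyndon word and w is nonempty, and let w = w₁w₂⋯w_N be the canonical factorization of w. Then each of the words vw₁, vw₁w₂, …, vw₁w₂⋯w_N is Lyndon. -/

import Mathlib

variable {I : Type*} [LinearOrder I]

/-- A word is *Lyndon* if it is nonempty and lexicographically strictly smaller
than each of its proper nonempty suffixes. -/
def IsLyndon (w : List I) : Prop :=
  w ≠ [] ∧ ∀ u v : List I, w = u ++ v → u ≠ [] → v ≠ [] → w < v

/-- `fs` is the canonical (Chen–Fox–Lyndon) factorization of `w`:
a weakly decreasing list of Lyndon words whose concatenation is `w`. -/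
def IsCFLFactorization (w : List I) (fs : List (List I)) : Prop :=
  fs.flatten = w ∧ (∀ f ∈ fs, IsLyndon f) ∧ fs.Chain' (· ≥ ·)

/-- Strict "letter-type" lexicographic inequality: the two words agree on a common
prefix and then differ at a letter present in both. -/
def LtE (a b : List I) : Prop :=
  ∃ (c : List I) (x y : I) (a' b' : List I), x < y ∧ a = c ++ x :: a' ∧ b = c ++ y :: b'

lemma lex_cons_iff {x y : I} {a b : List I} :
    x :: a < y :: b ↔ x < y ∨ (x = y ∧ a < b) := by
  constructor
  · intro h
    cases h with
    | rel h => exact Or.inl h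
    | cons h => exact Or.inr ⟨rfl, h⟩
  · rintro (h | ⟨rfl, h⟩)
    · exact List.Lex.rel h
    · exact List.Lex.cons h

lemma append_lt_left (c : List I) {a b : List I} : c ++ a < c ++ b ↔ a < b := by
  induction c with
  | nil => simp
  | cons x c IH =>
    show x :: (c ++ a) < x :: (c ++ b) ↔ a < b
    rw [lex_cons_iff]; simp [IH]

lemma nil_lt_iff {b : List I} : ([] : List I) < b ↔ b ≠ [] := by
  cases b with
  | nil => simp
  | cons y b => exact iff_of_true List.Lex.nil (by simp)

lemma not_lt_nil (a : List I) : ¬ a < [] := List.not_lt_nil a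

lemma prefix_lt {a b : List I} (h : a <+: b) (hne : a ≠ b) : a < b := by
  obtain ⟨t, rfl⟩ := h
  have ht : t ≠ [] := by rintro rfl; exact hne (by simp)
  have : a ++ [] < a ++ t := (append_lt_left a).mpr (nil_lt_iff.mpr ht)
  simpa using this

lemma LtE.append {a b : List I} (h : LtE a b) (s t : List I) : LtE (a ++ s) (b ++ t) := by
  obtain ⟨c, x, y, a', b', hxy, rfl, rfl⟩ := h
  exact ⟨c, x, y, a' ++ s, b' ++ t, hxy, by simp, by simp⟩

lemma LtE.lt {a b : List I} (h : LtE a b) : a < b := by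
  obtain ⟨c, x, y, a', b', hxy, rfl, rfl⟩ := h
  exact (append_lt_left c).mpr (List.Lex.rel hxy)

lemma LtE.lt_append {a b : List I} (h : LtE a b) (s t : List I) : a ++ s < b ++ t :=
  (h.append s t).lt

lemma not_LtE_nil (a : List I) : ¬ LtE a [] := by
  rintro ⟨c, x, y, a', b', hxy, ha, hb⟩
  exact (List.cons_ne_nil _ _) (List.append_eq_nil_iff.mp hb.symm).2

lemma not_nil_LtE (b : List I) : ¬ LtE [] b := by
  rintro ⟨c, x, y, a', b', hxy, ha, hb⟩
  exact (List.cons_ne_nil _ _) (List.append_eq_nil_iff.mp ha.symm).2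

lemma LtE_cons_iff {x y : I} {a b : List I} :
    LtE (x :: a) (y :: b) ↔ x < y ∨ (x = y ∧ LtE a b) := by
  constructor
  · rintro ⟨c, u, v, a', b', huv, ha, hb⟩
    cases c with
    | nil =>
      simp only [List.nil_append, List.cons.injEq] at ha hb
      exact Or.inl (ha.1 ▸ hb.1 ▸ huv)
    | cons z c' =>
      simp only [List.cons_append, List.cons.injEq] at ha hb
      exact Or.inr ⟨ha.1.trans hb.1.symm, ⟨c', u, v, a', b', huv, ha.2, hb.2⟩⟩
  · rintro (h | ⟨rfl, ⟨c, u, v, a', b', huv, ha, hb⟩⟩)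
    · exact ⟨[], x, y, a, b, h, rfl, rfl⟩
    · exact ⟨x :: c, u, v, a', b', huv, by simp [ha], by simp [hb]⟩

lemma lt_iff_LtE_or_prefix (a b : List I) :
    a < b ↔ LtE a b ∨ (a <+: b ∧ a ≠ b) := by
  induction a generalizing b with
  | nil =>
    cases b with
    | nil => simp [not_nil_LtE]
    | cons y b =>
      constructor
      · intro _
        exact Or.inr ⟨List.nil_prefix, by simp⟩
      · intro _
        exact List.Lex.nil
  | cons x a IH =>
    cases b with
    | nil =>
      constructor
      · intro h
        exact absurd h (not_lt_nil _)
      · rintro (h | ⟨h, _⟩)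
        · exact absurd h (not_LtE_nil _)
        · exact absurd (List.prefix_nil.mp h) (List.cons_ne_nil _ _)
    | cons y b =>
      rw [lex_cons_iff, LtE_cons_iff, IH b]
      constructor
      · rintro (h | ⟨rfl, (h | ⟨hpre, hne⟩)⟩)
        · exact Or.inl (Or.inl h)
        · exact Or.inl (Or.inr ⟨rfl, h⟩)
        · exact Or.inr ⟨List.cons_prefix_cons.mpr ⟨rfl, hpre⟩, by simpa using hne⟩
      · rintro (((h | ⟨rfl, h⟩)) | ⟨hpre, hne⟩)
        · exact Or.inl h
        · exact Or.inr ⟨rfl, Or.inl h⟩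
        · obtain ⟨rfl, hpre'⟩ := List.cons_prefix_cons.mp hpre
          exact Or.inr ⟨rfl, Or.inr ⟨hpre', by simpa using hne⟩⟩

lemma LtE.trans {a b c : List I} (hab : LtE a b) (hbc : LtE b c) : LtE a c := by
  obtain ⟨c₁, x₁, y₁, a₁, b₁, h₁, ha, hb₁⟩ := hab
  obtain ⟨c₂, x₂, y₂, b₂, c₂', h₂, hb₂, hc⟩ := hbc
  have hp₁ : c₁ <+: b := ⟨_, hb₁.symm⟩
  have hp₂ : c₂ <+: b := ⟨_, hb₂.symm⟩
  rcases List.prefix_or_prefix_of_prefix hp₁ hp₂ with h | h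
  · obtain ⟨e, rfl⟩ := h
    cases e with
    | nil =>
      simp only [List.append_nil] at hb₂
      rw [hb₁] at hb₂
      have := List.append_cancel_left hb₂
      obtain ⟨h3, h4⟩ : y₁ = x₂ ∧ b₁ = b₂ := by simpa using this
      exact ⟨c₁, x₁, y₂, a₁, c₂', lt_trans h₁ (h3 ▸ h₂), ha, by rw [hc]; simp⟩
    | cons z e' =>
      rw [hb₁] at hb₂
      have h5 : y₁ :: b₁ = z :: (e' ++ x₂ :: b₂) := by
        have := List.append_cancel_left (hb₂.trans (by simp [List.append_assoc]) :
          c₁ ++ y₁ :: b₁ = c₁ ++ (z :: (e' ++ x₂ :: b₂)))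
        exact this
      obtain ⟨h6, _⟩ : y₁ = z ∧ _ := by simpa using h5
      exact ⟨c₁, x₁, y₁, a₁, e' ++ y₂ :: c₂', h₁, ha, by rw [hc, h6]; simp⟩
  · obtain ⟨e, rfl⟩ := h
    cases e with
    | nil =>
      simp only [List.append_nil] at hb₁
      rw [hb₂] at hb₁
      obtain ⟨h3, h4⟩ : x₂ = y₁ ∧ b₂ = b₁ := by simpa using List.append_cancel_left hb₁
      exact ⟨c₂, x₁, y₂, a₁, c₂', lt_trans (lt_of_lt_of_eq h₁ h3.symm) h₂,
        by rw [ha]; simp, hc⟩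
    | cons z e' =>
      rw [hb₂] at hb₁
      have h5 : x₂ :: b₂ = z :: (e' ++ y₁ :: b₁) := by
        have := List.append_cancel_left (hb₁.trans (by simp [List.append_assoc]) :
          c₂ ++ x₂ :: b₂ = c₂ ++ (z :: (e' ++ y₁ :: b₁)))
        exact this
      obtain ⟨h6, _⟩ : x₂ = z ∧ _ := by simpa using h5
      refine ⟨c₂, x₂, y₂, e' ++ x₁ :: a₁, c₂', h₂, ?_, hc⟩
      rw [ha, h6]; simp

lemma LtE_of_LtE_prefix {a b c : List I} (h : LtE a b) (hbc : b <+: c) : LtE a c := by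
  obtain ⟨c₀, x, y, a', b', hxy, ha, hb⟩ := h
  obtain ⟨d, rfl⟩ := hbc
  exact ⟨c₀, x, y, a', b' ++ d, hxy, ha, by rw [hb]; simp⟩

lemma lyndon_LtE_suffix {p q r : List I} (hp : IsLyndon p) (heq : p = q ++ r)
    (hq : q ≠ []) (hr : r ≠ []) : LtE p r := by
  have hlt : p < r := hp.2 q r heq hq hr
  rcases (lt_iff_LtE_or_prefix p r).mp hlt with h | ⟨hpre, _⟩
  · exact h
  · exfalso
    have h1 : r.length < p.length := by
      rw [heq, List.length_append]
      have : 0 < q.length := List.length_pos_iff.mpr hq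
      omega
    exact absurd hpre.length_le (by omega)

lemma le_decomp {f m : List I} (h : f ≤ m) : LtE f m ∨ f <+: m := by
  rcases h.lt_or_eq with h | rfl
  · rcases (lt_iff_LtE_or_prefix f m).mp h with h | ⟨h, _⟩
    · exact Or.inl h
    · exact Or.inr h
  · exact Or.inr (List.prefix_refl f)

/-- Lemma S: if every factor of `t` is `≤ m` (with `m` Lyndon), then `t.flatten`
is lexicographically below `y ++ z` whenever `m` is letter-below `y`. -/
lemma lemS (m : List I) (hm : IsLyndon m) :
    ∀ t : List (List I), (∀ f ∈ t, f ≠ [] ∧ f ≤ m) →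
    ∀ y z : List I, LtE m y → t.flatten < y ++ z := by
  intro t
  induction t with
  | nil =>
    intro _ y z hy
    obtain ⟨c, x, y', a', b', hxy, hm', hy'⟩ := hy
    rw [List.flatten_nil, hy']
    exact nil_lt_iff.mpr (by simp)
  | cons f t' IH =>
    intro hft y z hmy
    obtain ⟨hf0, hfm⟩ := hft f (by simp)
    have hft' : ∀ f ∈ t', f ≠ [] ∧ f ≤ m := fun g hg => hft g (by simp [hg])
    rw [List.flatten_cons]
    rcases le_decomp hfm with hLtE | hpre
    · exact (hLtE.trans hmy).lt_append _ _
    · obtain ⟨c, xm, xy, m', y', hxy, hmeq, hyeq⟩ := hmy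
      have hcp : c <+: m := ⟨_, hmeq.symm⟩
      by_cases hfc : f <+: c
      · obtain ⟨c₂, rfl⟩ := hfc
        have hm2 : LtE (c₂ ++ xm :: m') (c₂ ++ xy :: y') :=
          ⟨c₂, xm, xy, m', y', hxy, rfl, rfl⟩
        have hmy2 : LtE m (c₂ ++ xy :: y') := by
          have hsuf : LtE m (c₂ ++ xm :: m') :=
            lyndon_LtE_suffix hm (by rw [hmeq]; simp) hf0 (by simp)
          exact hsuf.trans hm2
        have h3 := IH hft' (c₂ ++ xy :: y') z hmy2
        rw [hyeq]
        calc f ++ t'.flatten < f ++ ((c₂ ++ xy :: y') ++ z) := (append_lt_left f).mpr (by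
              simpa using h3)
          _ = f ++ c₂ ++ xy :: y' ++ z := by simp [List.append_assoc]
      · have hcf : c <+: f :=
          (List.prefix_or_prefix_of_prefix hpre hcp).resolve_left hfc
        obtain ⟨f₂, rfl⟩ := hcf
        have hf₂ : f₂ <+: xm :: m' := by
          have := hpre
          rw [hmeq] at this
          exact (List.prefix_append_right_inj c).mp this
        cases f₂ with
        | nil => exact absurd (by simp) hfc
        | cons z₀ f₃ =>
          obtain ⟨rfl, _⟩ := List.cons_prefix_cons.mp hf₂
          have hfy : LtE (c ++ z₀ :: f₃) y := ⟨c, z₀, xy, f₃, y', hxy, rfl, hyeq⟩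
          exact hfy.lt_append _ _

/-- Lemma T: the flatten of factors all `≤ m` cannot strictly dominate `m` prepended. -/
lemma lemT (m : List I) (hm : IsLyndon m) :
    ∀ t : List (List I), (∀ f ∈ t, f ≠ [] ∧ f ≤ m) → ¬ (m ++ t.flatten < t.flatten) := by
  intro t
  induction t with
  | nil => simpa using not_lt_nil m
  | cons f t' IH =>
    intro hft hcon
    obtain ⟨hf0, hfm⟩ := hft f (by simp)
    have hft' : ∀ f ∈ t', f ≠ [] ∧ f ≤ m := fun g hg => hft g (by simp [hg])
    rcases le_decomp hfm with hLtE | hpre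
    · have h1 : LtE ((f :: t').flatten) (m ++ (f :: t').flatten) := by
        rw [List.flatten_cons]
        exact hLtE.append _ _
      exact absurd hcon (lt_asymm h1.lt)
    · by_cases hfm' : f = m
      · subst hfm'
        rw [List.flatten_cons] at hcon
        exact IH hft' ((append_lt_left f).mp hcon)
      · obtain ⟨g, hg⟩ := hpre
        have hg0 : g ≠ [] := by rintro rfl; exact hfm' (by simpa using hg)
        have hmg : LtE m g := lyndon_LtE_suffix hm hg.symm hf0 hg0
        have h1 : t'.flatten < g ++ (f ++ t'.flatten) := lemS m hm t' hft' g _ hmg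
        rw [List.flatten_cons, ← hg] at hcon
        have h2 : g ++ (f ++ t'.flatten) < t'.flatten := by
          have := (append_lt_left f).mp (by
            calc f ++ (g ++ (f ++ t'.flatten)) = (f ++ g) ++ (f ++ t'.flatten) := by
                  simp [List.append_assoc]
              _ < f ++ t'.flatten := by rw [hg] at hcon ⊢; exact hcon
            )
          exact this
        exact absurd (lt_trans h1 h2) (lt_irrefl _)

/-- Lemma W: no proper nonempty suffix `r` of the Lyndon word `p` (which has the
Lyndon word `m` as a prefix) can be strictly below the flatten of factors all `≤ m`. -/
lemma lemW (p m : List I) (hp : IsLyndon p) (hm : IsLyndon m) (hmp : m <+: p) :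
    ∀ n : ℕ, ∀ t : List (List I), ∀ r : List I, r.length ≤ n →
      (∀ f ∈ t, f ≠ [] ∧ f ≤ m) → r ≠ [] → (∃ q, q ≠ [] ∧ p = q ++ r) →
      ¬ (r < t.flatten) := by
  intro n
  induction n with
  | zero =>
    intro t r hlen _ hr _
    exact absurd (List.length_eq_zero_iff.mp (Nat.le_zero.mp hlen)) hr
  | succ n IH =>
    rintro t r hlen hft hr ⟨q, hq, hqr⟩
    have hpr : LtE p r := lyndon_LtE_suffix hp hqr hq hr
    obtain ⟨c, xp, xr, p₁, r₁, hx, hpeq, hreq⟩ := hpr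
    have hcp : c <+: p := ⟨_, hpeq.symm⟩
    by_cases hmc : m <+: c
    · -- r = m ++ r'
      obtain ⟨c', rfl⟩ := hmc
      have hrr : r = m ++ (c' ++ xr :: r₁) := by rw [hreq]; simp [List.append_assoc]
      set r' := c' ++ xr :: r₁ with hr'def
      have hr'0 : r' ≠ [] := by simp [hr'def]
      have hlen' : r'.length ≤ n := by
        have h1 : r.length = m.length + r'.length := by rw [hrr]; simp
        have h2 : 0 < m.length := List.length_pos_iff.mpr hm.1
        omega
      have hsuf : ∃ q2, q2 ≠ [] ∧ p = q2 ++ r' :=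
        ⟨q ++ m, by simp [hq], by rw [hqr, hrr, List.append_assoc]⟩
      intro hcon
      cases t with
      | nil => exact not_lt_nil _ hcon
      | cons f t' =>
        obtain ⟨hf0, hfm⟩ := hft f (by simp)
        have hft' : ∀ f ∈ t', f ≠ [] ∧ f ≤ m := fun g hg => hft g (by simp [hg])
        rcases le_decomp hfm with hLtE | hpre
        · have h1 : LtE f r := LtE_of_LtE_prefix hLtE ⟨r', hrr.symm⟩
          have h2 : (f :: t').flatten < r := by
            have := h1.lt_append t'.flatten []
            simpa using this
          exact absurd hcon (lt_asymm h2)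
        · by_cases hfm' : f = m
          · subst hfm'
            rw [List.flatten_cons, hrr] at hcon
            exact IH t' r' hlen' hft' hr'0 hsuf ((append_lt_left f).mp hcon)
          · obtain ⟨g, hg⟩ := hpre
            have hg0 : g ≠ [] := by rintro rfl; exact hfm' (by simpa using hg)
            have hmg : LtE m g := lyndon_LtE_suffix hm hg.symm hf0 hg0
            have h1 : t'.flatten < g ++ r' := lemS m hm t' hft' g r' hmg
            rw [List.flatten_cons, hrr, ← hg] at hcon
            have h2 : g ++ r' < t'.flatten := by
              have h3 : f ++ (g ++ r') < f ++ t'.flatten := by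
                calc f ++ (g ++ r') = (f ++ g) ++ r' := by simp [List.append_assoc]
                  _ < f ++ t'.flatten := hcon
              exact (append_lt_left f).mp h3
            exact absurd (lt_trans h1 h2) (lt_irrefl _)
    · -- LtE m r, use lemS directly
      have hcm : c <+: m := (List.prefix_or_prefix_of_prefix hmp hcp).resolve_left hmc
      obtain ⟨δ, hδ⟩ := hcm
      have hδ0 : δ ≠ [] := by
        rintro rfl
        exact hmc (by simp [← hδ])
      obtain ⟨σ, hσ⟩ := hmp
      have hδσ : δ ++ σ = xp :: p₁ := by
        have h1 : c ++ (δ ++ σ) = c ++ xp :: p₁ := by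
          rw [← List.append_assoc, hδ, hσ, hpeq]
        exact List.append_cancel_left h1
      cases δ with
      | nil => exact absurd rfl hδ0
      | cons d δ₁ =>
        have hd : d = xp := by
          have := hδσ
          simp only [List.cons_append, List.cons.injEq] at this
          exact this.1
        have hmr : LtE m r := ⟨c, xp, xr, δ₁, r₁, hx, by rw [← hδ, hd], hreq⟩
        intro hcon
        have h1 : t.flatten < r ++ [] := lemS m hm t hft r [] hmr
        rw [List.append_nil] at h1
        exact absurd (lt_trans hcon h1) (lt_irrefl _)

/-- Concatenation of Lyndon words `x < y` is Lyndon. -/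
lemma lyndon_append {x y : List I} (hx : IsLyndon x) (hy : IsLyndon y) (hxy : x < y) :
    IsLyndon (x ++ y) := by
  have hxylt : x ++ y < y := by
    rcases (lt_iff_LtE_or_prefix x y).mp hxy with hLtE | ⟨⟨d, hd⟩, hne⟩
    · have := hLtE.lt_append y []
      simpa using this
    · have hd0 : d ≠ [] := by rintro rfl; exact hne (by simpa using hd)
      have h1 : y < d := hy.2 x d hd.symm hx.1 hd0
      calc x ++ y < x ++ d := (append_lt_left x).mpr h1
        _ = y := hd
  refine ⟨by simp [hx.1], ?_⟩
  intro a b hab ha hb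
  rcases List.append_eq_append_iff.mp hab with ⟨a', ha', hy'⟩ | ⟨c', hx', hb'⟩
  · -- a = x ++ a', y = a' ++ b
    by_cases ha'0 : a' = []
    · subst ha'0
      simp only [List.nil_append] at hy'
      subst hy'
      exact hxylt
    · have h1 : y < b := hy.2 a' b hy' ha'0 hb
      exact lt_trans hxylt h1
  · -- x = a ++ c', b = c' ++ y
    by_cases hc'0 : c' = []
    · subst hc'0
      simp only [List.nil_append] at hb'
      rw [hb']
      exact hxylt
    · have h1 : LtE x c' := lyndon_LtE_suffix hx hx' ha hc'0
      rw [hb']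
      exact h1.lt_append y y

/-- If `u = vw` is Lyndon with `v` Lyndon and `w` nonempty with canonical
factorization `w = w₁⋯w_N`, then `vw₁`, `vw₁w₂`, …, `vw₁⋯w_N` are all Lyndon. -/
theorem lyndon_prefix_extensions (u v w : List I) (ws : List (List I))
    (hu : IsLyndon u) (hv : IsLyndon v) (heq : u = v ++ w) (hw : w ≠ [])
    (hws : IsCFLFactorization w ws) :
    ∀ k : ℕ, 1 ≤ k → k ≤ ws.length → IsLyndon (v ++ (ws.take k).flatten) := by
  obtain ⟨hflat, hlyn, hchain⟩ := hws
  have hpw : ws.Pairwise (· ≥ ·) := List.isChain_iff_pairwise.mp hchain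
  have hfactors : ∀ k, (hk : k < ws.length) →
      ∀ f ∈ ws.drop (k + 1), f ≠ [] ∧ f ≤ ws[k] := by
    intro k hk f hf
    refine ⟨(hlyn f (List.mem_of_mem_drop hf)).1, ?_⟩
    obtain ⟨j, hj, hfj⟩ := List.mem_iff_getElem.mp hf
    have hjlen : k + 1 + j < ws.length := by
      have := hj
      rw [List.length_drop] at this
      omega
    have hge := (List.pairwise_iff_getElem.mp hpw) k (k + 1 + j) hk hjlen (by omega)
    rw [← hfj, List.getElem_drop]
    exact hge
  have step : ∀ k, (hk : k < ws.length) → IsLyndon (v ++ (ws.take k).flatten) →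
      (v ++ (ws.take k).flatten) < ws[k] := by
    intro k hk hL
    set p := v ++ (ws.take k).flatten with hpdef
    set m := ws[k] with hmdef
    set tl := (ws.drop (k + 1)).flatten with htldef
    have hm : IsLyndon m := hlyn _ (List.getElem_mem hk)
    have hm0 : m ≠ [] := hm.1
    have hp0 : p ≠ [] := by simp [hpdef, hv.1]
    have hmtl0 : m ++ tl ≠ [] := by simp [hm0]
    have hueq : u = p ++ (m ++ tl) := by
      rw [heq, ← hflat]
      conv_lhs => rw [← List.take_append_drop k ws]
      rw [List.flatten_append, List.drop_eq_getElem_cons hk, List.flatten_cons]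
      simp [hpdef, hmdef, htldef, List.append_assoc]
    by_contra hnot
    have hmp' : m ≤ p := le_of_not_gt hnot
    have hplt : p < m ++ tl := by
      have h1 : p < u := by
        refine prefix_lt ⟨m ++ tl, hueq.symm⟩ ?_
        intro hpu
        have : p ++ (m ++ tl) = p ++ [] := by rw [← hueq, ← hpu]; simp
        exact hmtl0 (List.append_cancel_left this)
      have h2 : u < m ++ tl := hu.2 p (m ++ tl) hueq hp0 hmtl0
      exact lt_trans h1 h2
    rcases hmp'.lt_or_eq with hlt | heqmp
    · rcases (lt_iff_LtE_or_prefix m p).mp hlt with hLtE | ⟨hpre, hne⟩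
      · have h3 : m ++ tl < p ++ [] := hLtE.lt_append tl []
        rw [List.append_nil] at h3
        exact absurd hplt (lt_asymm h3)
      · obtain ⟨r, hr⟩ := hpre
        have hr0 : r ≠ [] := by rintro rfl; exact hne (by simpa using hr)
        have hrtl : r < tl := by
          rw [← hr] at hplt
          exact (append_lt_left m).mp hplt
        exact lemW p m hL hm ⟨r, hr⟩ r.length (ws.drop (k + 1)) r le_rfl
          (hfactors k hk) hr0 ⟨m, hm0, hr.symm⟩ hrtl
    · -- p = m
      have h2 : u < m ++ tl := hu.2 p (m ++ tl) hueq hp0 hmtl0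
      rw [hueq, ← heqmp] at h2
      exact lemT m hm (ws.drop (k + 1)) (hfactors k hk) ((append_lt_left m).mp h2)
  have main : ∀ k, k ≤ ws.length → IsLyndon (v ++ (ws.take k).flatten) := by
    intro k
    induction k with
    | zero => intro _; simpa using hv
    | succ k IH =>
      intro hk
      have hk' : k < ws.length := hk
      have hL := IH (le_of_lt hk')
      have hlt := step k hk' hL
      have hsplit : v ++ (ws.take (k + 1)).flatten =
          (v ++ (ws.take k).flatten) ++ ws[k] := by
        have h1 : ws.take (k + 1) = ws.take k ++ [ws[k]] :=
          (List.take_concat_get hk').symm ▸ by simp [List.concat_eq_append]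
        rw [h1, List.flatten_append]
        simp [List.append_assoc]
      rw [hsplit]
      exact lyndon_append hL (hlyn _ (List.getElem_mem hk')) hlt
  intro k _ hk
  exact main k hk
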